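/- Let k_F ≥ 1, ℓ ∈ ℤ³∖{0}, and let c > 0, B > 0, 0 ≤ g ≤ B. Let K be a complex matrix on L_ℓ such that |(Kⁿ)_{r,s}| ≤ (c·g)ⁿ · k_F^{-1} · (λ_{ℓ,r}+λ_{ℓ,s})^{-1} for all integers n ≥ 1 and all r,s ∈ L_ℓ. Then there exists a constant C > 0 depending only on c and B such that | (sinh K)_{r,s} − K_{r,s} | ≤ C · g³ · k_F^{-1} · (λ_{ℓ,r}+λ_{ℓ,s})^{-1} for all r,s ∈ L_ℓ, where sinh K := Σ_{j≥0} K^{2j+1}/(2j+1)! is the matrix hyperbolic sine. -/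

import Mathlib

open scoped BigOperators
open MeasureTheory

noncomputable section

attribute [local instance] Classical.propDecidable

/-- The momentum lattice `ℤ³`. -/
abbrev Z3 : Type := Fin 3 → ℤ

/-- Squared Euclidean norm `|p|²` of an integer vector, as a real number. -/
def nsq (p : Z3) : ℝ := ∑ i, ((p i : ℝ)) ^ 2

/-- The Fermi ball `B_F = {k ∈ ℤ³ : |k| ≤ k_F}`. -/
def BF (kF : ℝ) : Set Z3 := {k | nsq k ≤ kF ^ 2}

/-- The lens `L_ℓ = B_F^c ∩ (B_F + ℓ)`. -/
def lens (kF : ℝ) (ℓ : Z3) : Set Z3 := {p | p ∉ BF kF ∧ p - ℓ ∈ BF kF}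

/-- The excitation energy `λ_{ℓ,p} = (|p|² − |p−ℓ|²)/2`. -/
def lam (ℓ p : Z3) : ℝ := (nsq p - nsq (p - ℓ)) / 2

/-- The energy gap `e(q) = | |q|² − min_{p ∈ B_F^c} |p|² + 1/2 |`. -/
def efun (kF : ℝ) (q : Z3) : ℝ := |nsq q - sInf (nsq '' (BF kF)ᶜ) + 1 / 2|

/-- Product of two (lens-supported) matrices, realized as functions on `ℤ³ × ℤ³`. -/
def matMulC (A B : Z3 → Z3 → ℂ) : Z3 → Z3 → ℂ := fun r s => ∑' t : Z3, A r t * B t s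

/-- `m`-th power of a matrix realized as a function on `ℤ³ × ℤ³`. -/
def matPowC (K : Z3 → Z3 → ℂ) : ℕ → Z3 → Z3 → ℂ
  | 0 => fun r s => if r = s then 1 else 0
  | n + 1 => matMulC K (matPowC K n)


lemma matPowC_one (K : Z3 → Z3 → ℂ) (r s : Z3) : matPowC K 1 r s = K r s := by
  show matMulC K (matPowC K 0) r s = K r s
  unfold matMulC matPowC
  have h : (fun t : Z3 => K r t * (if t = s then (1:ℂ) else 0)) =
      fun t => if t = s then K r s else 0 := by
    funext t; split_ifs with h
    · subst h; ring
    · ring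
  rw [h, tsum_ite_eq]

lemma lam_pos {kF : ℝ} {ℓ p : Z3} (hp : p ∈ lens kF ℓ) : 0 < lam ℓ p := by
  obtain ⟨h1, h2⟩ := hp
  simp only [BF, Set.mem_setOf_eq] at h1 h2
  have h3 : kF ^ 2 < nsq p := lt_of_not_ge h1
  unfold lam
  linarith

/-- Comparison of the matrix hyperbolic sine with the matrix itself
(Lemma `lem:extract_nqex`, abstract form):
`|(sinh K)_{r,s} - K_{r,s}| <= C g^3 kF^-1 (lam_r + lam_s)^-1`. -/
theorem stmt13 : ∀ c : ℝ, 0 < c → ∀ B : ℝ, 0 < B → ∃ C : ℝ, 0 < C ∧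
    ∀ kF : ℝ, 1 ≤ kF → ∀ ℓ : Z3, ℓ ≠ 0 → ∀ g : ℝ, 0 ≤ g → g ≤ B →
    ∀ K : Z3 → Z3 → ℂ,
      (∀ r s : Z3, (r ∉ lens kF ℓ ∨ s ∉ lens kF ℓ) → K r s = 0) →
      (∀ n : ℕ, 1 ≤ n → ∀ r ∈ lens kF ℓ, ∀ s ∈ lens kF ℓ,
        ‖matPowC K n r s‖ ≤ (c * g) ^ n * kF⁻¹ * (lam ℓ r + lam ℓ s)⁻¹) →
      ∀ r ∈ lens kF ℓ, ∀ s ∈ lens kF ℓ,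
        ‖(∑' j : ℕ, ((Nat.factorial (2 * j + 1) : ℂ))⁻¹ * matPowC K (2 * j + 1) r s)
            - K r s‖
          ≤ C * g ^ 3 * kF⁻¹ * (lam ℓ r + lam ℓ s)⁻¹ := by
  intro c hc B hB
  have hSsummable : Summable (fun m : ℕ =>
      c ^ (2*m+3) * B ^ (2*m) / (Nat.factorial (2*m+3) : ℝ)) := by
    apply Summable.of_nonneg_of_le
      (f := fun m : ℕ => c ^ 3 * ((c^2*B^2) ^ m / (Nat.factorial m : ℝ)))
    · intro m; positivity
    · intro m
      have h1 : (Nat.factorial m : ℝ) ≤ (Nat.factorial (2*m+3) : ℝ) := by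
        exact_mod_cast Nat.factorial_le (by omega)
      have hkey : c ^ (2*m+3) * B ^ (2*m) = c ^ 3 * (c^2*B^2) ^ m := by
        rw [mul_pow, ← pow_mul, ← pow_mul]; ring
      rw [hkey, mul_div_assoc]
      gcongr
    · exact (Real.summable_pow_div_factorial (c^2*B^2)).mul_left (c^3)
  set S : ℝ := ∑' m : ℕ, c ^ (2*m+3) * B ^ (2*m) / (Nat.factorial (2*m+3) : ℝ) with hS
  have hSnonneg : 0 ≤ S := tsum_nonneg (fun m => by positivity)
  refine ⟨1 + S, by linarith, ?_⟩
  intro kF hkF ℓ hℓ g hg hgB K hKsupp hK r hr s hs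
  have hlr := lam_pos hr
  have hls := lam_pos hs
  have hLam : 0 < (lam ℓ r + lam ℓ s)⁻¹ := by positivity
  have hkF0 : 0 < kF⁻¹ := by positivity
  set f : ℕ → ℂ := fun j => ((Nat.factorial (2*j+1) : ℂ))⁻¹ * matPowC K (2*j+1) r s with hf
  have hbound : ∀ j : ℕ, ‖f j‖ ≤
      (c*g) ^ (2*j+1) / (Nat.factorial (2*j+1) : ℝ) * (kF⁻¹ * (lam ℓ r + lam ℓ s)⁻¹) := by
    intro j
    have h1 : ‖f j‖ = ((Nat.factorial (2*j+1) : ℝ))⁻¹ * ‖matPowC K (2*j+1) r s‖ := by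
      simp [hf, norm_mul]
    rw [h1]
    have h2 := hK (2*j+1) (by omega) r hr s hs
    have hfac : (0:ℝ) < (Nat.factorial (2*j+1) : ℝ) := by exact_mod_cast Nat.factorial_pos _
    calc ((Nat.factorial (2*j+1) : ℝ))⁻¹ * ‖matPowC K (2*j+1) r s‖
        ≤ ((Nat.factorial (2*j+1) : ℝ))⁻¹ *
            ((c*g) ^ (2*j+1) * kF⁻¹ * (lam ℓ r + lam ℓ s)⁻¹) := by
          apply mul_le_mul_of_nonneg_left h2 (by positivity)
      _ = (c*g) ^ (2*j+1) / (Nat.factorial (2*j+1) : ℝ) * (kF⁻¹ * (lam ℓ r + lam ℓ s)⁻¹) := by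
          ring
  have hinj : Function.Injective (fun j : ℕ => 2*j+1) := by intro a b h; dsimp only at h; omega
  have hGsum : Summable (fun j : ℕ =>
      (c*g) ^ (2*j+1) / (Nat.factorial (2*j+1) : ℝ) * (kF⁻¹ * (lam ℓ r + lam ℓ s)⁻¹)) :=
    (((Real.summable_pow_div_factorial (c*g)).comp_injective hinj).mul_right _)
  have hsum : Summable f := Summable.of_norm_bounded hGsum hbound
  have hf0 : f 0 = K r s := by
    simp [hf, matPowC_one]
  have hsplit : (∑' j : ℕ, f j) - K r s = ∑' j : ℕ, f (j+1) := by
    rw [Summable.tsum_eq_zero_add hsum, hf0]; ring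
  have hsum' : Summable (fun j : ℕ => f (j+1)) := by
    exact (summable_nat_add_iff 1).mpr hsum
  -- bound each tail term
  have hbnd2 : ∀ j : ℕ, ‖f (j+1)‖ ≤
      c ^ (2*j+3) * B ^ (2*j) / (Nat.factorial (2*j+3) : ℝ) *
        (g^3 * (kF⁻¹ * (lam ℓ r + lam ℓ s)⁻¹)) := by
    intro j
    have h1 := hbound (j+1)
    have he : 2*(j+1)+1 = 2*j+3 := by omega
    rw [he] at h1
    refine h1.trans ?_
    have hcg : (c*g) ^ (2*j+3) ≤ c ^ (2*j+3) * B ^ (2*j) * g^3 := by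
      have h3 : g ^ (2*j) ≤ B ^ (2*j) := pow_le_pow_left₀ hg hgB _
      calc (c*g) ^ (2*j+3) = c ^ (2*j+3) * (g ^ (2*j) * g^3) := by rw [mul_pow]; ring
        _ ≤ c ^ (2*j+3) * (B ^ (2*j) * g^3) := by gcongr
        _ = c ^ (2*j+3) * B ^ (2*j) * g^3 := by ring
    have hfac : (0:ℝ) < (Nat.factorial (2*j+3) : ℝ) := by exact_mod_cast Nat.factorial_pos _
    calc (c*g) ^ (2*j+3) / (Nat.factorial (2*j+3) : ℝ) * (kF⁻¹ * (lam ℓ r + lam ℓ s)⁻¹)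
        ≤ (c ^ (2*j+3) * B ^ (2*j) * g^3) / (Nat.factorial (2*j+3) : ℝ) *
            (kF⁻¹ * (lam ℓ r + lam ℓ s)⁻¹) := by
          gcongr
      _ = c ^ (2*j+3) * B ^ (2*j) / (Nat.factorial (2*j+3) : ℝ) *
            (g^3 * (kF⁻¹ * (lam ℓ r + lam ℓ s)⁻¹)) := by ring
  have hnsum : Summable (fun j : ℕ => ‖f (j+1)‖) := by
    apply Summable.of_nonneg_of_le (fun j => norm_nonneg _) hbnd2
    exact hSsummable.mul_right _
  calc ‖(∑' j : ℕ, f j) - K r s‖ = ‖∑' j : ℕ, f (j+1)‖ := by rw [hsplit]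
    _ ≤ ∑' j : ℕ, ‖f (j+1)‖ := norm_tsum_le_tsum_norm hnsum
    _ ≤ ∑' j : ℕ, c ^ (2*j+3) * B ^ (2*j) / (Nat.factorial (2*j+3) : ℝ) *
          (g^3 * (kF⁻¹ * (lam ℓ r + lam ℓ s)⁻¹)) :=
        Summable.tsum_le_tsum hbnd2 hnsum (hSsummable.mul_right _)
    _ = S * (g^3 * (kF⁻¹ * (lam ℓ r + lam ℓ s)⁻¹)) := by
        rw [tsum_mul_right]
    _ ≤ (1 + S) * g ^ 3 * kF⁻¹ * (lam ℓ r + lam ℓ s)⁻¹ := by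
        have h1 : S * (g^3 * (kF⁻¹ * (lam ℓ r + lam ℓ s)⁻¹)) =
            S * g^3 * kF⁻¹ * (lam ℓ r + lam ℓ s)⁻¹ := by ring
        rw [h1]
        gcongr
        linarith
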